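/- arXiv:1606.03618 — 2 statements merged into one kernel-verified Lean document; each statement's English description precedes it below -/
import Mathlib

section
/- Let G be a finite group, H a subgroup of index 2, E an algebraically closed field of characteristic coprime to |G|, and χ, χ' : H → E^* characters with χ ≠ χ^c. Then Ind_H^G χ ≅ Ind_H^G χ' if and only if χ' = χ or χ' = χ^c. -/
/-- If `ρ (c⁻¹ * g * c) u = a • u` then `ρ c u` is an eigenvector of `ρ g`. -/
lemma conj_eig_aux {E G V : Type*} [Field E] [Group G] [AddCommGroup V] [Module E V]
    (ρ : Representation E G V) (c g : G) (u : V) (a : E)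
    (h : ρ (c⁻¹ * g * c) u = a • u) : ρ g (ρ c u) = a • (ρ c u) := by
  have h1 : g * c = c * (c⁻¹ * g * c) := by group
  rw [← Module.End.mul_apply, ← map_mul, h1, map_mul, Module.End.mul_apply, h, map_smul]

lemma range_pair_aux {W : Type*} (x y : W) : Set.range ![x, y] = ({x, y} : Set W) := by
  ext z
  simp only [Set.mem_range, Fin.exists_fin_two, Matrix.cons_val_zero,
    Matrix.cons_val_one, Matrix.head_cons, Set.mem_insert_iff, Set.mem_singleton_iff]
  constructor
  · rintro (rfl | rfl) <;> simp
  · rintro (rfl | rfl) <;> simp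

/-- Let `G` be a finite group, `H` a subgroup of index 2, `c ∈ G \ H`, `E` an
algebraically closed field of characteristic coprime to `|G|`, and `χ, χ' : H → Eˣ`
characters with `χ ≠ χ^c`.  Then `Ind_H^G χ ≅ Ind_H^G χ'` if and only if `χ' = χ` or
`χ' = χ^c`.  The induced representations are realized concretely: `ρ` (resp. `ρ'`) acts
on `V` (resp. `V'`) with a vector `v` (resp. `v'`) on which `H` acts through `χ`
(resp. `χ'`) and such that `(v, ρ c v)` (resp. `(v', ρ' c v')`) is a basis. -/
theorem stmt7 (G : Type*) [Group G] [Fintype G] (H : Subgroup G) (hH : H.index = 2)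
    (hnorm : H.Normal) (c : G) (hc : c ∉ H)
    (E : Type*) [Field E] [IsAlgClosed E] (hchar : ¬ (ringChar E ∣ Fintype.card G))
    (χ χ' : H →* Eˣ)
    (hχ : ∃ h : H, χ ⟨c * h * c⁻¹, hnorm.conj_mem h.1 h.2 c⟩ ≠ χ h)
    (V : Type*) [AddCommGroup V] [Module E V] (ρ : Representation E G V)
    (v : V) (hv : v ≠ 0)
    (heig : ∀ h : H, ρ (h : G) v = (χ h : E) • v)
    (hnotline : ¬ ∃ a : E, ρ c v = a • v)
    (hspan : Submodule.span E {v, ρ c v} = ⊤)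
    (V' : Type*) [AddCommGroup V'] [Module E V'] (ρ' : Representation E G V')
    (v' : V') (hv' : v' ≠ 0)
    (heig' : ∀ h : H, ρ' (h : G) v' = (χ' h : E) • v')
    (hnotline' : ¬ ∃ a : E, ρ' c v' = a • v')
    (hspan' : Submodule.span E {v', ρ' c v'} = ⊤) :
    (∃ e : V ≃ₗ[E] V', ∀ (g : G) (x : V), e (ρ g x) = ρ' g (e x)) ↔
      (χ' = χ ∨ ∀ h : H, χ' h = χ ⟨c * h * c⁻¹, hnorm.conj_mem h.1 h.2 c⟩) := by
  have hc2 : c * c ∈ H := Subgroup.mul_self_mem_of_index_two hH c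
  have memconj : ∀ h : H, c⁻¹ * (h : G) * c ∈ H := fun h => by
    simpa using hnorm.conj_mem _ h.2 c⁻¹
  -- linear independence of the bases
  have li : LinearIndependent E ![v, ρ c v] :=
    (LinearIndependent.pair_iff' hv).2 (fun a ha => hnotline ⟨a, ha.symm⟩)
  have li' : LinearIndependent E ![v', ρ' c v'] :=
    (LinearIndependent.pair_iff' hv').2 (fun a ha => hnotline' ⟨a, ha.symm⟩)
  -- eigenvector property of `ρ' c v'`
  have heigw' : ∀ h : H, ρ' (h : G) (ρ' c v') =
      (χ' ⟨c⁻¹ * (h : G) * c, memconj h⟩ : E) • (ρ' c v') := fun h =>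
    conj_eig_aux ρ' c (h : G) v' _ (heig' ⟨c⁻¹ * (h : G) * c, memconj h⟩)
  constructor
  · rintro ⟨e, he⟩
    obtain ⟨a, b, hab⟩ : ∃ a b : E, a • v' + b • (ρ' c v') = e v :=
      Submodule.mem_span_pair.1 (by rw [hspan']; trivial)
    have huniq : ∀ s₁ t₁ s₂ t₂ : E,
        s₁ • v' + t₁ • (ρ' c v') = s₂ • v' + t₂ • (ρ' c v') → s₁ = s₂ ∧ t₁ = t₂ := by
      intro s₁ t₁ s₂ t₂ hst
      have h0 := (LinearIndependent.pair_iff.1 li') (s₁ - s₂) (t₁ - t₂) (by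
        rw [sub_smul, sub_smul, sub_add_sub_comm, hst, sub_self])
      exact ⟨sub_eq_zero.1 h0.1, sub_eq_zero.1 h0.2⟩
    -- the key coefficient identities
    have hco : ∀ h : H, (χ h : E) * a = a * (χ' h : E) ∧
        (χ h : E) * b = b * (χ' ⟨c⁻¹ * (h : G) * c, memconj h⟩ : E) := by
      intro h
      have h1 : e (ρ (h : G) v) = ρ' (h : G) (e v) := he _ _
      rw [heig h, map_smul, ← hab] at h1
      rw [smul_add, smul_smul, smul_smul, map_add, map_smul, map_smul,
        heig' h, heigw' h, smul_smul, smul_smul] at h1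
      exact huniq _ _ _ _ h1
    have hev : e v ≠ 0 := fun h0 => hv (by simpa using e.map_eq_zero_iff.1 h0)
    rcases ne_or_eq a 0 with ha | ha
    · left
      ext h
      have key := (hco h).1
      rw [mul_comm] at key
      exact (mul_left_cancel₀ ha key).symm
    rcases ne_or_eq b 0 with hb | hb
    · -- b ≠ 0 : χ' = χ^c
      right
      intro h
      have key := (hco ⟨c * (h : G) * c⁻¹, hnorm.conj_mem h.1 h.2 c⟩).2
      have hsub : (⟨c⁻¹ * ((⟨c * (h : G) * c⁻¹, hnorm.conj_mem h.1 h.2 c⟩ : H) : G) * c,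
          memconj _⟩ : H) = h := by
        apply Subtype.ext
        show c⁻¹ * (c * (h : G) * c⁻¹) * c = (h : G)
        group
      rw [hsub] at key
      have : (χ ⟨c * (h : G) * c⁻¹, hnorm.conj_mem h.1 h.2 c⟩ : E) = (χ' h : E) := by
        rw [mul_comm] at key
        exact mul_left_cancel₀ hb key
      exact (Units.ext this).symm
    · exact absurd (by rw [← hab, ha, hb]; simp) hev
  · intro hcase
    -- generic construction of the equivariant isomorphism
    have key : ∀ u : V', (∀ h : H, ρ' (h : G) u = (χ h : E) • u) →
        LinearIndependent E ![u, ρ' c u] → Submodule.span E {u, ρ' c u} = ⊤ →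
        ∃ e : V ≃ₗ[E] V', ∀ (g : G) (x : V), e (ρ g x) = ρ' g (e x) := by
      intro u hu liu spu
      obtain ⟨e, he_v, he_w⟩ : ∃ e : V ≃ₗ[E] V', e v = u ∧ e (ρ c v) = ρ' c u := by
        refine ⟨(Module.Basis.mk li (by rw [range_pair_aux]; rw [hspan])).equiv
          (Module.Basis.mk liu (by rw [range_pair_aux]; rw [spu])) (Equiv.refl _), ?_, ?_⟩
        · have h0 := Module.Basis.equiv_apply (b := Module.Basis.mk li (by rw [range_pair_aux]; rw [hspan]))
            (b' := Module.Basis.mk liu (by rw [range_pair_aux]; rw [spu])) (i := 0) (e := Equiv.refl _)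
          simpa [Module.Basis.mk_apply] using h0
        · have h0 := Module.Basis.equiv_apply (b := Module.Basis.mk li (by rw [range_pair_aux]; rw [hspan]))
            (b' := Module.Basis.mk liu (by rw [range_pair_aux]; rw [spu])) (i := 1) (e := Equiv.refl _)
          simpa [Module.Basis.mk_apply] using h0
      refine ⟨e, ?_⟩
      -- equivariance on the basis elements for h ∈ H and for c
      have Ph : ∀ h : H, e (ρ (h : G) v) = ρ' (h : G) (e v) ∧
          e (ρ (h : G) (ρ c v)) = ρ' (h : G) (e (ρ c v)) := by
        intro h
        constructor
        · rw [heig h, map_smul, he_v, hu h]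
        · rw [conj_eig_aux ρ c (h : G) v _ (heig ⟨c⁻¹ * (h : G) * c, memconj h⟩),
            map_smul, he_w,
            conj_eig_aux ρ' c (h : G) u _ (hu ⟨c⁻¹ * (h : G) * c, memconj h⟩)]
      have Pc : e (ρ c v) = ρ' c (e v) ∧ e (ρ c (ρ c v)) = ρ' c (e (ρ c v)) := by
        constructor
        · rw [he_v, he_w]
        · have h1 : ρ c (ρ c v) = (χ ⟨c * c, hc2⟩ : E) • v := by
            rw [← Module.End.mul_apply, ← map_mul]; exact heig ⟨c * c, hc2⟩
          have h2 : ρ' c (ρ' c u) = (χ ⟨c * c, hc2⟩ : E) • u := by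
            rw [← Module.End.mul_apply, ← map_mul]; exact hu ⟨c * c, hc2⟩
          rw [h1, map_smul, he_v, he_w, h2]
      -- extend from the basis and from generators of G
      have Plin : ∀ g : G, e (ρ g v) = ρ' g (e v) → e (ρ g (ρ c v)) = ρ' g (e (ρ c v)) →
          ∀ x : V, e (ρ g x) = ρ' g (e x) := by
        intro g h1 h2 x
        obtain ⟨m, n, hmn⟩ : ∃ m n : E, m • v + n • (ρ c v) = x :=
          Submodule.mem_span_pair.1 (by rw [hspan]; trivial)
        rw [← hmn]
        simp only [map_add, map_smul, h1, h2]
      have Pmul : ∀ g₁ g₂ : G, (∀ x, e (ρ g₁ x) = ρ' g₁ (e x)) →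
          (∀ x, e (ρ g₂ x) = ρ' g₂ (e x)) → ∀ x, e (ρ (g₁ * g₂) x) = ρ' (g₁ * g₂) (e x) := by
        intro g₁ g₂ h₁ h₂ x
        rw [map_mul, map_mul, Module.End.mul_apply, Module.End.mul_apply, h₁, h₂]
      intro g
      by_cases hg : g ∈ H
      · exact Plin g (Ph ⟨g, hg⟩).1 (Ph ⟨g, hg⟩).2
      · have hg' : g * c⁻¹ ∈ H := by
          rw [Subgroup.mul_mem_iff_of_index_two hH]
          simp [hg, hc]
        have hgc : g = (g * c⁻¹) * c := by group
        rw [hgc]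
        exact Pmul _ _ (Plin _ (Ph ⟨g * c⁻¹, hg'⟩).1 (Ph ⟨g * c⁻¹, hg'⟩).2)
          (Plin _ Pc.1 Pc.2)
    rcases hcase with hcase | hcase
    · exact key v' (fun h => by rw [heig' h, hcase]) li' hspan'
    · -- χ' = χ^c : use u = ρ' c v'
      have hu : ∀ h : H, ρ' (h : G) (ρ' c v') = (χ h : E) • (ρ' c v') := by
        intro h
        rw [heigw' h, hcase ⟨c⁻¹ * (h : G) * c, memconj h⟩]
        congr 2
        exact congrArg χ (Subtype.ext (by
          show c * (c⁻¹ * (h : G) * c) * c⁻¹ = (h : G)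
          group))
      have hcc : ρ' c (ρ' c v') = (χ' ⟨c * c, hc2⟩ : E) • v' := by
        rw [← Module.End.mul_apply, ← map_mul]; exact heig' ⟨c * c, hc2⟩
      have liu : LinearIndependent E ![ρ' c v', ρ' c (ρ' c v')] := by
        rw [hcc]
        rw [LinearIndependent.pair_iff]
        intro s t hst
        have h0 := (LinearIndependent.pair_iff.1 li') (t * (χ' ⟨c * c, hc2⟩ : E)) s (by
          rw [smul_smul, add_comm] at hst
          exact hst)
        refine ⟨h0.2, ?_⟩
        have := h0.1
        rcases mul_eq_zero.1 this with h | h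
        · exact h
        · exact absurd h (Units.ne_zero _)
      have spu : Submodule.span E {ρ' c v', ρ' c (ρ' c v')} = ⊤ := by
        rw [hcc, eq_top_iff, ← hspan']
        rw [Submodule.span_le]
        rintro z (hz | hz) <;> rw [hz]
        · exact Submodule.mem_span_pair.2 ⟨0, (χ' ⟨c * c, hc2⟩ : E)⁻¹, by
            rw [zero_smul, zero_add, smul_smul, inv_mul_cancel₀ (Units.ne_zero _), one_smul]⟩
        · exact Submodule.mem_span_pair.2 ⟨1, 0, by simp⟩
      exact key (ρ' c v') hu liu spu
end

section
/- Let G be a group, H an index-2 subgroup, E an algebraically closed field of characteristic ≠ 2, and χ : H → E^* a homomorphism with finite image. Then the induced representation ρ = Ind_H^G χ is semisimple; moreover if χ = χ^c then ρ is isomorphic to a direct sum of two characters of G, namely the two extensions of χ to G. -/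
/-- Auxiliary: a nonzero common eigenvector for a group representation gives rise to a
character of the group. -/
lemma aux_eig_hom {E V G : Type*} [Field E] [AddCommGroup V] [Module E V] [Group G]
    (ρ : Representation E G V) (w : V) (hw : w ≠ 0)
    (hex : ∀ g : G, ∃ t : E, ρ g w = t • w) :
    ∃ χ : G →* Eˣ, ∀ g : G, ρ g w = (χ g : E) • w := by
  choose s hs using hex
  have huniq : ∀ t t' : E, t • w = t' • w → t = t' := fun t t' h =>
    smul_left_injective E hw h
  have s_one : s 1 = 1 := by
    apply huniq
    rw [← hs 1, map_one]
    simp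
  have s_mul : ∀ g g' : G, s (g * g') = s g * s g' := by
    intro g g'
    apply huniq
    have e : ρ (g * g') w = ρ g (ρ g' w) := by rw [map_mul]; rfl
    rw [← hs (g * g'), e, hs g', map_smul, hs g, smul_smul, mul_comm (s g') (s g)]
  refine ⟨MonoidHom.toHomUnits ⟨⟨s, s_one⟩, s_mul⟩, fun g => ?_⟩
  rw [MonoidHom.coe_toHomUnits]
  exact hs g

/-- Let `G` be a group, `H` an index-2 subgroup, `c ∈ G \ H`, `E` an algebraically
closed field of characteristic `≠ 2` not dividing the order of the (finite) image of a
homomorphism `χ : H → Eˣ`.  Then the induced representation `ρ = Ind_H^G χ` —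
realized concretely as a representation on `V` with vector `v ≠ 0` on which `H` acts
through `χ` and such that `(v, ρ c v)` is a basis of `V` — is semisimple; moreover if
`χ = χ^c` then `ρ` is isomorphic to a direct sum of two characters of `G`, namely two
distinct extensions of `χ` to `G`. -/
theorem stmt19 (G : Type*) [Group G] (H : Subgroup G) (hH : H.index = 2)
    (hnorm : H.Normal) (c : G) (hc : c ∉ H)
    (E : Type*) [Field E] [IsAlgClosed E] (hchar2 : ringChar E ≠ 2)
    (χ : H →* Eˣ) (hfin : (Set.range χ).Finite)
    (hcharim : ¬ (ringChar E ∣ Nat.card (Set.range χ)))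
    (V : Type*) [AddCommGroup V] [Module E V] (ρ : Representation E G V)
    (v : V) (hv : v ≠ 0)
    (heig : ∀ h : H, ρ (h : G) v = (χ h : E) • v)
    (hindep : LinearIndependent E ![v, ρ c v])
    (hspan : Submodule.span E {v, ρ c v} = ⊤) :
    -- `ρ` is semisimple: every invariant subspace has an invariant complement
    (∀ W : Submodule E V, (∀ g : G, ∀ w ∈ W, ρ g w ∈ W) →
      ∃ W' : Submodule E V, (∀ g : G, ∀ w ∈ W', ρ g w ∈ W') ∧
        W ⊓ W' = ⊥ ∧ W ⊔ W' = ⊤) ∧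
    -- if `χ = χ^c`, then `ρ` is the direct sum of the two extensions of `χ` to `G`
    ((∀ h : H, χ ⟨c * h * c⁻¹, hnorm.conj_mem h.1 h.2 c⟩ = χ h) →
      ∃ χ₁ χ₂ : G →* Eˣ, χ₁ ≠ χ₂ ∧
        (∀ h : H, χ₁ (h : G) = χ h) ∧ (∀ h : H, χ₂ (h : G) = χ h) ∧
        ∃ w₁ w₂ : V, w₁ ≠ 0 ∧ w₂ ≠ 0 ∧
          (∀ g : G, ρ g w₁ = (χ₁ g : E) • w₁) ∧
          (∀ g : G, ρ g w₂ = (χ₂ g : E) • w₂) ∧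
          Submodule.span E {w₁} ⊔ Submodule.span E {w₂} = ⊤) := by
  have two_ne : (2 : E) ≠ 0 := Ring.two_ne_zero hchar2
  have hcc : c * c ∈ H := Subgroup.mul_self_mem_of_index_two hH c
  have hmem : ∀ h : H, c⁻¹ * (h : G) * c ∈ H := fun h => by
    simpa using hnorm.conj_mem _ h.2 c⁻¹
  -- every element not in H has the form h * c with h ∈ H
  have hdec : ∀ g : G, g ∉ H → g * c⁻¹ ∈ H := by
    intro g hg
    rw [Subgroup.mul_mem_iff_of_index_two hH]
    simp [hg, hc]
  set w : V := ρ c v with hw_def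
  -- coefficient extraction
  have hco : ∀ a b : E, a • v + b • w = 0 → a = 0 ∧ b = 0 := by
    intro a b hab
    have h2 := Fintype.linearIndependent_iff.mp hindep ![a, b] (by
      simpa [Fin.sum_univ_two] using hab)
    exact ⟨h2 0, h2 1⟩
  have hco2 : ∀ a b a' b' : E, a • v + b • w = a' • v + b' • w → a = a' ∧ b = b' := by
    intro a b a' b' h
    have h0 : (a - a') • v + (b - b') • w = 0 := by
      have : (a • v + b • w) - (a' • v + b' • w) = (a - a') • v + (b - b') • w := by module
      rw [← this, h, sub_self]
    obtain ⟨h1, h2⟩ := hco _ _ h0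
    exact ⟨sub_eq_zero.mp h1, sub_eq_zero.mp h2⟩
  -- action of h on w
  have hρw : ∀ h : H, ρ (h : G) w = (χ ⟨c⁻¹ * h * c, hmem h⟩ : E) • w := by
    intro h
    have e1 : (h : G) * c = c * (c⁻¹ * h * c) := by group
    have : ρ ((h : G) * c) v = ρ c (ρ (c⁻¹ * (h : G) * c) v) := by
      rw [e1, map_mul]; rfl
    calc ρ (h : G) w = ρ ((h : G) * c) v := by rw [map_mul]; rfl
      _ = ρ c (ρ (c⁻¹ * (h : G) * c) v) := this
      _ = ρ c ((χ ⟨c⁻¹ * h * c, hmem h⟩ : E) • v) := by rw [heig ⟨_, hmem h⟩]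
      _ = (χ ⟨c⁻¹ * h * c, hmem h⟩ : E) • w := by rw [map_smul]
  have hρcw : ρ c w = (χ ⟨c * c, hcc⟩ : E) • v := by
    calc ρ c w = ρ (c * c) v := by rw [map_mul]; rfl
      _ = (χ ⟨c * c, hcc⟩ : E) • v := heig ⟨_, hcc⟩
  set k : E := (χ ⟨c * c, hcc⟩ : E) with hk_def
  have hk0 : k ≠ 0 := Units.ne_zero _
  -- generic computations
  have hcomph : ∀ (x y : E) (h : H),
      ρ (h : G) (x • v + y • w) =
        (x * (χ h : E)) • v + (y * (χ ⟨c⁻¹ * h * c, hmem h⟩ : E)) • w := by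
    intro x y h
    rw [map_add, map_smul, map_smul, heig, hρw, smul_smul, smul_smul]
  have hcompc : ∀ x y : E, ρ c (x • v + y • w) = (y * k) • v + x • w := by
    intro x y
    rw [map_add, map_smul, map_smul, hρcw]
    module
  constructor
  · -- semisimplicity
    intro W hW
    by_cases hbot : W = ⊥
    · exact ⟨⊤, by simp, by simp [hbot], by simp⟩
    by_cases htop : W = ⊤
    · exact ⟨⊥, by simp, by simp, by simp [htop]⟩
    -- W is an invariant line
    obtain ⟨u, huW, hu0⟩ := Submodule.exists_mem_ne_zero_of_ne_bot hbot
    have hrange : Set.range ![v, w] = {v, w} := by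
      ext x; simp [Matrix.range_cons, Matrix.range_empty, or_comm]
    have hB : ⊤ ≤ Submodule.span E (Set.range ![v, w]) := by
      rw [hrange, hspan]
    let B : Module.Basis (Fin 2) E V := Module.Basis.mk hindep hB
    haveI : FiniteDimensional E V := Module.Finite.of_basis B
    have hfr : Module.finrank E V = 2 := by
      rw [Module.finrank_eq_card_basis B, Fintype.card_fin]
    have hWspan : W = Submodule.span E {u} := by
      have h1 : Submodule.span E {u} ≤ W := by
        rwa [Submodule.span_singleton_le_iff_mem]
      have hlt : Module.finrank E W < 2 := by
        rw [← hfr]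
        exact Submodule.finrank_lt htop
      have hge : 1 ≤ Module.finrank E W := by
        have := Submodule.finrank_mono h1
        rwa [finrank_span_singleton hu0] at this
      symm
      apply Submodule.eq_of_le_of_finrank_eq h1
      rw [finrank_span_singleton hu0]; omega
    obtain ⟨a, b, hab⟩ : ∃ a b : E, a • v + b • w = u := by
      apply Submodule.mem_span_pair.mp
      rw [hspan]; trivial
    have heigu : ∀ g : G, ∃ t : E, ρ g u = t • u := by
      intro g
      obtain ⟨t, ht⟩ := Submodule.mem_span_singleton.mp (hWspan ▸ hW g u huW)
      exact ⟨t, ht.symm⟩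
    obtain ⟨t, ht⟩ := heigu c
    have htc : b * k = t * a ∧ a = t * b := by
      apply hco2
      have e1 : ρ c u = (b * k) • v + a • w := by rw [← hab, hcompc]
      have e2 : t • u = (t * a) • v + (t * b) • w := by rw [← hab]; module
      rw [← e1, ← e2, ht]
    have hb0 : b ≠ 0 := by
      intro hb
      have ha : a = 0 := by rw [htc.2, hb, mul_zero]
      apply hu0
      rw [← hab, ha, hb, zero_smul, zero_smul, add_zero]
    have ha0 : a ≠ 0 := by
      intro ha
      apply hb0
      have : b * k = 0 := by rw [htc.1, ha, mul_zero]
      exact (mul_eq_zero.mp this).resolve_right hk0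
    -- the character is conjugation-invariant
    have hsame : ∀ h : H, (χ ⟨c⁻¹ * h * c, hmem h⟩ : E) = (χ h : E) := by
      intro h
      obtain ⟨s, hs⟩ := heigu (h : G)
      obtain ⟨e1, e2⟩ := hco2 (a * (χ h : E)) (b * (χ ⟨c⁻¹ * h * c, hmem h⟩ : E))
        (s * a) (s * b) (by
          have f1 : ρ (h : G) u
              = (a * (χ h : E)) • v + (b * (χ ⟨c⁻¹ * h * c, hmem h⟩ : E)) • w := by
            rw [← hab, hcomph]
          have f2 : s • u = (s * a) • v + (s * b) • w := by rw [← hab]; module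
          rw [← f1, ← f2, hs])
      have hs1 : (χ h : E) = s := mul_left_cancel₀ ha0 (e1.trans (mul_comm s a))
      have hs2 : (χ ⟨c⁻¹ * h * c, hmem h⟩ : E) = s :=
        mul_left_cancel₀ hb0 (e2.trans (mul_comm s b))
      rw [hs1, hs2]
    -- the complementary invariant line
    set u' : V := (-a) • v + b • w with hu'_def
    have hu'0 : u' ≠ 0 := by
      intro h0
      exact ha0 (neg_eq_zero.mp (hco _ _ h0).1)
    have heigu' : ∀ g : G, ∃ s : E, ρ g u' = s • u' := by
      have hch : ∀ h : H, ρ (h : G) u' = (χ h : E) • u' := by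
        intro h
        rw [hu'_def, hcomph, hsame]
        module
      have hcc' : ρ c u' = (-t) • u' := by
        rw [hu'_def, hcompc]
        rw [show b * k = t * a from htc.1]
        have : a = t * b := htc.2
        rw [this]
        module
      intro g
      by_cases hg : g ∈ H
      · exact ⟨χ ⟨g, hg⟩, hch ⟨g, hg⟩⟩
      · have h1 : g * c⁻¹ ∈ H := hdec g hg
        have h2 : g = (g * c⁻¹) * c := by group
        refine ⟨(-t) * (χ ⟨g * c⁻¹, h1⟩ : E), ?_⟩
        have e : ρ g u' = ρ (g * c⁻¹) (ρ c u') := by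
          rw [← Module.End.mul_apply, ← map_mul, inv_mul_cancel_right]
        rw [e, hcc', map_smul, hch ⟨g * c⁻¹, h1⟩, smul_smul]
    refine ⟨Submodule.span E {u'}, ?_, ?_, ?_⟩
    · intro g x hx
      obtain ⟨s, hs⟩ := Submodule.mem_span_singleton.mp hx
      obtain ⟨s', hs'⟩ := heigu' g
      rw [← hs, map_smul, hs', smul_smul]
      exact Submodule.smul_mem _ _ (Submodule.mem_span_singleton_self u')
    · rw [eq_bot_iff]
      rintro x ⟨hx1, hx2⟩
      rw [hWspan] at hx1
      obtain ⟨s, hs⟩ := Submodule.mem_span_singleton.mp hx1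
      obtain ⟨s', hs'⟩ := Submodule.mem_span_singleton.mp hx2
      have hco3 : s * a = s' * (-a) ∧ s * b = s' * b := by
        apply hco2
        have e : s • u = s' • u' := by rw [hs, hs']
        rw [← hab, hu'_def] at e
        have e1 : s • (a • v + b • w) = (s * a) • v + (s * b) • w := by module
        have e2 : s' • ((-a) • v + b • w) = (s' * -a) • v + (s' * b) • w := by module
        rw [e1, e2] at e
        exact e
      have hss : s = s' := mul_right_cancel₀ hb0 hco3.2
      have hsa : s * a = 0 := by
        have e : s * a = s * (-a) := by rw [hco3.1, hss]
        have h2 : (2 : E) * (s * a) = 0 := by linear_combination e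
        exact (mul_eq_zero.mp h2).resolve_left two_ne
      have hs0 : s = 0 := (mul_eq_zero.mp hsa).resolve_right ha0
      simp [← hs, hs0]
    · rw [eq_top_iff, ← hspan, Submodule.span_le]
      have humem : u ∈ W ⊔ Submodule.span E {u'} :=
        Submodule.mem_sup_left huW
      have hu'mem : u' ∈ W ⊔ Submodule.span E {u'} :=
        Submodule.mem_sup_right (Submodule.mem_span_singleton_self u')
      have hvmem : v ∈ W ⊔ Submodule.span E {u'} := by
        have hsub : u - u' = (2 * a) • v := by
          rw [← hab, hu'_def]; module
        have : v = (2 * a)⁻¹ • (u - u') := by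
          rw [hsub, smul_smul, inv_mul_cancel₀ (mul_ne_zero two_ne ha0), one_smul]
        rw [this]
        exact Submodule.smul_mem _ _ (Submodule.sub_mem _ humem hu'mem)
      have hwmem : w ∈ W ⊔ Submodule.span E {u'} := by
        have hadd : u + u' = (2 * b) • w := by
          rw [← hab, hu'_def]; module
        have : w = (2 * b)⁻¹ • (u + u') := by
          rw [hadd, smul_smul, inv_mul_cancel₀ (mul_ne_zero two_ne hb0), one_smul]
        rw [this]
        exact Submodule.smul_mem _ _ (Submodule.add_mem _ humem hu'mem)
      rintro x (rfl | rfl)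
      · exact hvmem
      · exact hwmem
  · -- the two extensions
    intro hcase
    have hsame : ∀ h : H, (χ ⟨c⁻¹ * h * c, hmem h⟩ : E) = (χ h : E) := by
      intro h
      have e1 := hcase ⟨c⁻¹ * h * c, hmem h⟩
      have e2 : χ (⟨c * (c⁻¹ * (h : G) * c) * c⁻¹,
          hnorm.conj_mem _ (hmem h) c⟩ : H) = χ h :=
        congrArg χ (Subtype.ext (by group))
      exact congrArg Units.val (e1.symm.trans e2)
    obtain ⟨l, hl⟩ := IsAlgClosed.exists_pow_nat_eq (k := E) k zero_lt_two
    have hl0 : l ≠ 0 := by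
      intro h0
      apply hk0
      rw [← hl, h0]; ring
    set w₁ : V := l • v + w with hw₁_def
    set w₂ : V := (-l) • v + w with hw₂_def
    have hw₁0 : w₁ ≠ 0 := by
      intro h0
      have : l • v + (1 : E) • w = 0 := by rw [one_smul]; exact h0
      exact one_ne_zero (hco _ _ this).2
    have hw₂0 : w₂ ≠ 0 := by
      intro h0
      have : (-l) • v + (1 : E) • w = 0 := by rw [one_smul]; exact h0
      exact one_ne_zero (hco _ _ this).2
    have hcancel : ∀ (u : V) (t t' : E), u ≠ 0 → t • u = t' • u → t = t' :=
      fun u t t' hu h => smul_left_injective E hu h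
    -- eigen equations
    have hch : ∀ (x : E) (h : H), ρ (h : G) (x • v + w) = (χ h : E) • (x • v + w) := by
      intro x h
      have : x • v + w = x • v + (1 : E) • w := by rw [one_smul]
      rw [this, hcomph, hsame]
      module
    have hc1 : ρ c w₁ = l • w₁ := by
      rw [hw₁_def]
      have : l • v + w = l • v + (1 : E) • w := by rw [one_smul]
      rw [this, hcompc, ← hl]
      module
    have hc2 : ρ c w₂ = (-l) • w₂ := by
      rw [hw₂_def]
      have : (-l) • v + w = (-l) • v + (1 : E) • w := by rw [one_smul]
      rw [this, hcompc, ← hl]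
      module
    have hexgen : ∀ (u : V) (lu : E), (∀ h : H, ρ (h : G) u = (χ h : E) • u) →
        ρ c u = lu • u → ∀ g : G, ∃ t : E, ρ g u = t • u := by
      intro u lu hhu hcu g
      by_cases hg : g ∈ H
      · exact ⟨χ ⟨g, hg⟩, hhu ⟨g, hg⟩⟩
      · have h1 : g * c⁻¹ ∈ H := hdec g hg
        have h2 : g = (g * c⁻¹) * c := by group
        refine ⟨lu * (χ ⟨g * c⁻¹, h1⟩ : E), ?_⟩
        have e : ρ g u = ρ (g * c⁻¹) (ρ c u) := by
          rw [← Module.End.mul_apply, ← map_mul, inv_mul_cancel_right]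
        rw [e, hcu, map_smul, hhu ⟨g * c⁻¹, h1⟩, smul_smul]
    obtain ⟨χ₁, hχ₁⟩ := aux_eig_hom ρ w₁ hw₁0 (hexgen w₁ l (fun h => hch l h) hc1)
    obtain ⟨χ₂, hχ₂⟩ := aux_eig_hom ρ w₂ hw₂0 (hexgen w₂ (-l) (fun h => hch (-l) h) hc2)
    have hχ₁c : (χ₁ c : E) = l := hcancel w₁ _ _ hw₁0 (by rw [← hχ₁ c, hc1])
    have hχ₂c : (χ₂ c : E) = -l := hcancel w₂ _ _ hw₂0 (by rw [← hχ₂ c, hc2])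
    refine ⟨χ₁, χ₂, ?_, ?_, ?_, w₁, w₂, hw₁0, hw₂0, hχ₁, hχ₂, ?_⟩
    · intro heq
      have e : (χ₁ c : E) = -l := by rw [heq, hχ₂c]
      rw [hχ₁c] at e
      have h2 : (2 : E) * l = 0 := by rw [two_mul]; nth_rewrite 2 [e]; ring
      exact hl0 ((mul_eq_zero.mp h2).resolve_left two_ne)
    · intro h
      apply Units.ext
      exact hcancel w₁ _ _ hw₁0 (by rw [← hχ₁ h, hch l h])
    · intro h
      apply Units.ext
      exact hcancel w₂ _ _ hw₂0 (by rw [← hχ₂ h, hch (-l) h])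
    · rw [eq_top_iff, ← hspan, Submodule.span_le]
      have h1mem : w₁ ∈ Submodule.span E {w₁} ⊔ Submodule.span E {w₂} :=
        Submodule.mem_sup_left (Submodule.mem_span_singleton_self w₁)
      have h2mem : w₂ ∈ Submodule.span E {w₁} ⊔ Submodule.span E {w₂} :=
        Submodule.mem_sup_right (Submodule.mem_span_singleton_self w₂)
      have hvmem : v ∈ Submodule.span E {w₁} ⊔ Submodule.span E {w₂} := by
        have hsub : w₁ - w₂ = (2 * l) • v := by
          rw [hw₁_def, hw₂_def]; module
        have : v = (2 * l)⁻¹ • (w₁ - w₂) := by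
          rw [hsub, smul_smul, inv_mul_cancel₀ (mul_ne_zero two_ne hl0), one_smul]
        rw [this]
        exact Submodule.smul_mem _ _ (Submodule.sub_mem _ h1mem h2mem)
      have hwmem : w ∈ Submodule.span E {w₁} ⊔ Submodule.span E {w₂} := by
        have hadd : w₁ + w₂ = (2 : E) • w := by
          rw [hw₁_def, hw₂_def]; module
        have : w = (2 : E)⁻¹ • (w₁ + w₂) := by
          rw [hadd, smul_smul, inv_mul_cancel₀ two_ne, one_smul]
        rw [this]
        exact Submodule.smul_mem _ _ (Submodule.add_mem _ h1mem h2mem)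
      rintro x (rfl | rfl)
      · exact hvmem
      · exact hwmem
end
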